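/- Let R be a commutative ring and let n ≥ 2, m ≥ 1 be integers. Let Q ∈ R^{n×(2n+5)} be written as Q = [Q₁ | Q₂] with Q₁ ∈ R^{n×n} and Q₂ ∈ R^{n×(n+5)}, let Z ∈ R^{n×n}, and let z, u ∈ Rⁿ and v ∈ R^{n+5} satisfy Z·z = u, Q₁ᵀ·u = e₁, and Q₂ᵀ·u = v, where e₁ ∈ Rⁿ is the first standard basis vector. Then for all column vectors s, e ∈ R^m, a ∈ R^{n−1}, and matrices B ∈ R^{m×(n−1)}, G ∈ R^{m×(n+5)}: (s + e) − ([s | s·aᵀ + B | G]·Qᵀ·Z)·z = e − G·v, where [s | s·aᵀ + B | G] ∈ R^{m×(2n+5)} denotes the block matrix whose first column is s, whose next n−1 columns are s·aᵀ + B, and whose last n+5 columns are G. -/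

import Mathlib

open Matrix

/-- The key algebraic identity behind the `k`-sparse LWE reduction:
`(s + e) − ([s | s·aᵀ + B | G]·Qᵀ·Z)·z = e − G·v`, given `Z·z = u`, `Q₁ᵀ·u = e₁`,
`Q₂ᵀ·u = v`, where `Q = [Q₁ | Q₂]`. -/
theorem stmt_4 {R : Type*} [CommRing R] (n m : ℕ) (hn : 2 ≤ n) (hm : 1 ≤ m)
    (Q₁ : Matrix (Fin n) (Fin n) R) (Q₂ : Matrix (Fin n) (Fin (n + 5)) R)
    (Z : Matrix (Fin n) (Fin n) R) (z u : Fin n → R) (v : Fin (n + 5) → R)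
    (hZz : Z.mulVec z = u)
    (hQ₁ : Q₁ᵀ.mulVec u = fun j : Fin n => if (j : ℕ) = 0 then 1 else 0)
    (hQ₂ : Q₂ᵀ.mulVec u = v)
    (s e : Fin m → R) (a : Fin (n - 1) → R)
    (B : Matrix (Fin m) (Fin (n - 1)) R) (G : Matrix (Fin m) (Fin (n + 5)) R) :
    (s + e) -
        ((Matrix.fromCols
              (Matrix.of fun i (j : Fin n) =>
                if h : (j : ℕ) = 0 then s i
                else s i * a ⟨(j : ℕ) - 1, by have := j.isLt; omega⟩ +
                  B i ⟨(j : ℕ) - 1, by have := j.isLt; omega⟩)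
              G) *
            (Matrix.fromCols Q₁ Q₂)ᵀ * Z).mulVec z =
      e - G.mulVec v := by
  rw [← Matrix.mulVec_mulVec, ← Matrix.mulVec_mulVec, hZz,
    Matrix.transpose_fromCols, Matrix.fromRows_mulVec, hQ₁, hQ₂,
    Matrix.fromCols_mulVec_sumElim]
  have hS : (Matrix.of fun i (j : Fin n) =>
        if h : (j : ℕ) = 0 then s i
        else s i * a ⟨(j : ℕ) - 1, by have := j.isLt; omega⟩ +
          B i ⟨(j : ℕ) - 1, by have := j.isLt; omega⟩).mulVec
      (fun j : Fin n => if (j : ℕ) = 0 then (1 : R) else 0) = s := by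
    funext i
    simp only [Matrix.mulVec, dotProduct, Matrix.of_apply, mul_ite, mul_one, mul_zero]
    rw [Finset.sum_eq_single (⟨0, by omega⟩ : Fin n)]
    · simp
    · intro b _ hb
      have : (b : ℕ) ≠ 0 := by
        intro h; apply hb; exact Fin.ext h
      simp [this]
    · simp
  rw [hS]
  abel
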